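/- arXiv:1702.03194 — 5 statements merged into one kernel-verified Lean document; each statement's English description precedes it below -/
import Mathlib

section
/- Let r = [r_0, ..., r_m] and c = [c_0, ..., c_n] be strictly increasing sequences of natural numbers, and let {r̂, ĉ} be a maximal ordered sub-pair for {r, c} of length p+1, with ĉ a subsequence of c selected by indices β_0 < ... < β_p. Then the columns of T_{r,c} indexed by β_0, ..., β_p (i.e., the columns of T_{r,ĉ}) span the column space of T_{r,c}. -/
private lemma choose_split (a b : ℕ) (ha : 1 ≤ a) (hb : 1 ≤ b) :
    a.choose b = (a-1).choose b + (a-1).choose (b-1) := by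
  obtain ⟨a', rfl⟩ : ∃ a', a = a' + 1 := ⟨a - 1, by omega⟩
  obtain ⟨b', rfl⟩ : ∃ b', b = b' + 1 := ⟨b - 1, by omega⟩
  simpa [Nat.add_comm] using Nat.choose_succ_succ' a' b'

private lemma pascal_det_aux (N : ℕ) : ∀ (p : ℕ) (r c : Fin (p+1) → ℕ),
    StrictMono r → StrictMono c → (∑ j, c j) + p ≤ N →
    0 ≤ (Matrix.of fun i j : Fin (p+1) => ((c j).choose (r i) : ℚ)).det ∧
      ((∀ i, r i ≤ c i) →
        0 < (Matrix.of fun i j : Fin (p+1) => ((c j).choose (r i) : ℚ)).det) := by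
  induction N with
  | zero =>
    intro p r c hr hc hm
    obtain rfl : p = 0 := by omega
    constructor
    · rw [Matrix.det_fin_one]
      simp only [Matrix.of_apply]
      exact Nat.cast_nonneg _
    · intro h
      rw [Matrix.det_fin_one]
      have := Nat.choose_pos (h 0)
      simp only [Matrix.of_apply]
      exact_mod_cast this
  | succ N IH =>
    intro p r c hr hc hm
    match p, r, c, hr, hc, hm with
    | 0, r, c, hr, hc, hm =>
      constructor
      · rw [Matrix.det_fin_one]
        simp only [Matrix.of_apply]
        exact Nat.cast_nonneg _
      · intro h
        rw [Matrix.det_fin_one]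
        have := Nat.choose_pos (h 0)
        simp only [Matrix.of_apply]
        exact_mod_cast this
    | (k+1), r, c, hr, hc, hm =>
      by_cases hc0 : c 0 = 0
      · by_cases hr0 : r 0 = 0
        · -- expand along column 0
          have hA0 : ∀ i : Fin (k+2), i ≠ 0 →
              (Matrix.of fun i j : Fin (k+2) => ((c j).choose (r i) : ℚ)) i 0 = 0 := by
            intro i hi
            have h1 : 0 < r i := by
              have : (0 : Fin (k+2)) < i := Fin.pos_of_ne_zero hi
              have := hr this
              omega
            simp [hc0, Nat.choose_eq_zero_of_lt h1]
          have hdet : (Matrix.of fun i j : Fin (k+2) => ((c j).choose (r i) : ℚ)).det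
              = (Matrix.of fun i j : Fin (k+1) =>
                  ((c (Fin.succ j)).choose (r (Fin.succ i)) : ℚ)).det := by
            rw [Matrix.det_succ_column_zero]
            rw [Finset.sum_eq_single 0]
            · simp [hc0, hr0, Fin.succAbove_zero]
              congr 1
            · intro i _ hi
              rw [hA0 i hi]; ring
            · simp
          have hIH := IH k (fun i => r (Fin.succ i)) (fun j => c (Fin.succ j))
            (fun a b hab => hr (by simpa using hab))
            (fun a b hab => hc (by simpa using hab))
            (by
              have hs : ∑ j : Fin (k+2), c j = c 0 + ∑ j : Fin (k+1), c (Fin.succ j) :=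
                Fin.sum_univ_succ c
              have hm2 : (∑ j : Fin (k+2), c j) + (k+1) ≤ N + 1 := hm
              show (∑ j : Fin (k+1), c (Fin.succ j)) + k ≤ N
              omega)
          rw [hdet]
          exact ⟨hIH.1, fun h => hIH.2 (fun i => h (Fin.succ i))⟩
        · -- column 0 is zero
          have hdet : (Matrix.of fun i j : Fin (k+2) => ((c j).choose (r i) : ℚ)).det = 0 := by
            apply Matrix.det_eq_zero_of_column_eq_zero 0
            intro i
            have h1 : 0 < r i := by
              have := hr.monotone (Fin.zero_le i)
              omega
            simp [hc0, Nat.choose_eq_zero_of_lt h1]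
          refine ⟨le_of_eq hdet.symm, fun h => absurd (h 0) (by omega)⟩
      · -- main case : all c j ≥ 1, expand rows by Pascal's rule
        have hc1 : ∀ j, 1 ≤ c j := fun j => by
          have := hc.monotone (Fin.zero_le j); omega
        set rA : Fin (k+2) → Fin (k+2) → ℚ :=
          fun i j => ((c j - 1).choose (r i) : ℚ) with hrA
        set rB : Fin (k+2) → Fin (k+2) → ℚ :=
          fun i j => if r i = 0 then 0 else ((c j - 1).choose (r i - 1) : ℚ) with hrB
        have hsplit : (Matrix.of fun i j : Fin (k+2) => ((c j).choose (r i) : ℚ))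
            = Matrix.of (rA + rB) := by
          ext i j
          simp only [Matrix.of_apply, Pi.add_apply, hrA, hrB]
          rcases Nat.eq_zero_or_pos (r i) with h0 | h0
          · simp [h0]
          · rw [if_neg (by omega), choose_split (c j) (r i) (hc1 j) h0]
            push_cast
            ring
        have hdet : (Matrix.of fun i j : Fin (k+2) => ((c j).choose (r i) : ℚ)).det
            = ∑ s : Finset (Fin (k+2)), (Matrix.of (s.piecewise rA rB)).det := by
          rw [hsplit]
          exact Matrix.detRowAlternating.toMultilinearMap.map_add_univ rA rB
        -- row description of each term
        have hrow : ∀ (s : Finset (Fin (k+2))), (∀ i, i ∉ s → r i ≠ 0) →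
            ∀ i, s.piecewise rA rB i
              = fun j => ((c j - 1).choose (if i ∈ s then r i else r i - 1) : ℚ) := by
          intro s hs i
          by_cases hi : i ∈ s
          · rw [Finset.piecewise_eq_of_mem _ _ _ hi, if_pos hi]
          · rw [Finset.piecewise_eq_of_notMem _ _ _ hi, if_neg hi]
            funext j
            rw [hrB]
            simp [hs i hi]
        have hmeas : (∑ j : Fin (k+2), (c j - 1)) + (k + 1) ≤ N := by
          have h1 : ∑ j : Fin (k+2), (c j - 1 + 1) = ∑ j : Fin (k+2), c j :=
            Finset.sum_congr rfl (fun j _ => by have := hc1 j; omega)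
          rw [Finset.sum_add_distrib, Finset.sum_const, Finset.card_univ,
            Fintype.card_fin, smul_eq_mul, mul_one] at h1
          have hm2 : (∑ j : Fin (k+2), c j) + (k+1) ≤ N + 1 := hm
          omega
        have hcm : StrictMono (fun j : Fin (k+2) => c j - 1) := by
          intro a b hab
          have := hc hab
          have := hc1 a
          show c a - 1 < c b - 1
          omega
        -- nonnegativity of each term
        have hterm : ∀ s : Finset (Fin (k+2)),
            0 ≤ (Matrix.of (s.piecewise rA rB)).det := by
          intro s
          by_cases hz : ∃ i, i ∉ s ∧ r i = 0
          · obtain ⟨i, his, hri⟩ := hz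
            have : (Matrix.of (s.piecewise rA rB)).det = 0 := by
              apply Matrix.det_eq_zero_of_row_eq_zero i
              intro j
              show s.piecewise rA rB i j = 0
              rw [Finset.piecewise_eq_of_notMem _ _ _ his, hrB]
              simp [hri]
            exact le_of_eq this.symm
          · push_neg at hz
            set r' : Fin (k+2) → ℕ := fun i => if i ∈ s then r i else r i - 1 with hr'
            by_cases hinj : Function.Injective r'
            · have hmono : Monotone r' := by
                intro a b hab
                rcases eq_or_lt_of_le hab with rfl | hlt
                · exact le_rfl
                · have := hr hlt
                  simp only [hr']
                  split_ifs <;> omega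
              have hsm : StrictMono r' := hmono.strictMono_of_injective hinj
              have heq : Matrix.of (s.piecewise rA rB)
                  = Matrix.of fun i j : Fin (k+2) => (((fun j => c j - 1) j).choose (r' i) : ℚ) := by
                ext i j
                show s.piecewise rA rB i j = _
                rw [hrow s hz i]
                simp only [Matrix.of_apply, hr']
              rw [heq]
              exact (IH (k+1) r' (fun j => c j - 1) hsm hcm hmeas).1
            · rw [Function.not_injective_iff] at hinj
              obtain ⟨a, b, hab, hne⟩ := hinj
              have : (Matrix.of (s.piecewise rA rB)).det = 0 := by
                apply Matrix.det_zero_of_row_eq hne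
                show s.piecewise rA rB a = s.piecewise rA rB b
                rw [hrow s hz a, hrow s hz b]
                have hab' : (if a ∈ s then r a else r a - 1) = (if b ∈ s then r b else r b - 1) := hab
                rw [hab']
              exact le_of_eq this.symm
        constructor
        · rw [hdet]
          exact Finset.sum_nonneg fun s _ => hterm s
        · intro hle
          rw [hdet]
          apply Finset.sum_pos' (fun s _ => hterm s)
          refine ⟨Finset.univ.filter (fun i => r i < c i), Finset.mem_univ _, ?_⟩
          set s : Finset (Fin (k+2)) := Finset.univ.filter (fun i => r i < c i) with hsdef
          have ex : ∀ z, (z ∈ s → r z < c z) ∧ (z ∉ s → r z = c z) := by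
            intro z
            constructor
            · intro h; exact (Finset.mem_filter.mp h).2
            · intro h
              have : ¬ (r z < c z) := fun hlt => h (Finset.mem_filter.mpr ⟨Finset.mem_univ z, hlt⟩)
              have := hle z
              omega
          have hz : ∀ i, i ∉ s → r i ≠ 0 := by
            intro i hi
            have := (ex i).2 hi
            have := hc1 i
            omega
          set r' : Fin (k+2) → ℕ := fun i => if i ∈ s then r i else r i - 1 with hr'
          have hsm : StrictMono r' := by
            intro x y hxy
            have h1 := hr hxy
            have h2 := hc hxy
            have h3 := hc1 x
            simp only [hr']
            by_cases hx : x ∈ s <;> by_cases hy : y ∈ s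
            · have := (ex x).1 hx; have := (ex y).1 hy
              rw [if_pos hx, if_pos hy]; omega
            · have := (ex x).1 hx; have := (ex y).2 hy
              rw [if_pos hx, if_neg hy]; omega
            · have := (ex x).2 hx; have := (ex y).1 hy
              rw [if_neg hx, if_pos hy]; omega
            · have := (ex x).2 hx; have := (ex y).2 hy
              rw [if_neg hx, if_neg hy]; omega
          have heq : Matrix.of (s.piecewise rA rB)
              = Matrix.of fun i j : Fin (k+2) => (((fun j => c j - 1) j).choose (r' i) : ℚ) := by
            ext i j
            show s.piecewise rA rB i j = _
            rw [hrow s hz i]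
            simp only [Matrix.of_apply, hr']
          rw [heq]
          apply (IH (k+1) r' (fun j => c j - 1) hsm hcm hmeas).2
          intro i
          simp only [hr']
          by_cases hi : i ∈ s
          · have := (ex i).1 hi
            rw [if_pos hi]; omega
          · have := (ex i).2 hi
            rw [if_neg hi]; omega

lemma pascal_det_pos (p : ℕ) (r c : Fin (p+1) → ℕ)
    (hr : StrictMono r) (hc : StrictMono c) (h : ∀ i, r i ≤ c i) :
    0 < (Matrix.of fun i j : Fin (p+1) => ((c j).choose (r i) : ℚ)).det :=
  (pascal_det_aux ((∑ j, c j) + p) p r c hr hc le_rfl).2 h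


private lemma pascal_det_le (k : ℕ) (r c : Fin k → ℕ) (hr : StrictMono r) (hc : StrictMono c)
    (hd : (Matrix.of fun i j : Fin k => ((c j).choose (r i) : ℚ)).det ≠ 0) :
    ∀ i, r i ≤ c i := by
  have h1 : ∃ σ : Equiv.Perm (Fin k),
      ∏ l, (Matrix.of fun i j : Fin k => ((c j).choose (r i) : ℚ)) (σ l) l ≠ 0 := by
    by_contra h
    push_neg at h
    apply hd
    rw [Matrix.det_apply]
    exact Finset.sum_eq_zero fun σ _ => by rw [h σ, smul_zero]
  obtain ⟨σ, hσ⟩ := h1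
  have h2 : ∀ l, r (σ l) ≤ c l := by
    intro l
    by_contra hlt
    push_neg at hlt
    exact hσ (Finset.prod_eq_zero (Finset.mem_univ l) (by
      show ((c l).choose (r (σ l)) : ℚ) = 0
      rw [Nat.choose_eq_zero_of_lt hlt]
      simp))
  intro i
  have h3 : ∃ l, l ≤ i ∧ i ≤ σ l := by
    by_contra h
    push_neg at h
    have hmaps : ∀ a ∈ Finset.Iic i, σ a ∈ Finset.Iio i := by
      intro a ha
      exact Finset.mem_Iio.mpr (h a (Finset.mem_Iic.mp ha))
    have hcard := Finset.card_le_card_of_injOn σ hmaps (σ.injective.injOn)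
    rw [Fin.card_Iic, Fin.card_Iio] at hcard
    omega
  obtain ⟨l, hl1, hl2⟩ := h3
  calc r i ≤ r (σ l) := hr.monotone hl2
    _ ≤ c l := h2 l
    _ ≤ c i := hc.monotone hl1




/-- The submatrix of the Pascal upper-triangular matrix with rows
`r 0, …, r m` and columns `c 0, …, c n`: its `(i,j)` entry is the binomial
coefficient `C(c j, r i)` (which is `0` when `r i > c j`). -/
def pascalSub (r c : ℕ → ℕ) (m n : ℕ) : Matrix (Fin (m + 1)) (Fin (n + 1)) ℚ :=
  Matrix.of fun i j => ((c (j : ℕ)).choose (r (i : ℕ)) : ℚ)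

/-- `{r ∘ α, c ∘ β}` (restricted to indices `0, …, p`) is an ordered sub-pair of
length `p + 1` for the pair of finite sequences `[r 0, …, r m]`, `[c 0, …, c n]`:
`α` and `β` are strictly increasing selections of indices (so `r ∘ α` is a
subsequence of `[r 0, …, r m]` and `c ∘ β` is a subsequence of `[c 0, …, c n]`)
and `r (α i) ≤ c (β i)` for all `i = 0, …, p`. -/
def OrderedSubPair (r c : ℕ → ℕ) (m n p : ℕ) (α β : ℕ → ℕ) : Prop :=
  StrictMonoOn α (Set.Iic p) ∧ StrictMonoOn β (Set.Iic p) ∧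
    α p ≤ m ∧ β p ≤ n ∧ ∀ i ≤ p, r (α i) ≤ c (β i)

/-- If `{r ∘ α, c ∘ β}` is a maximal ordered sub-pair of length `p + 1` for
`{[r 0, …, r m], [c 0, …, c n]}`, then the columns of `T_{r,c}` indexed by
`β 0, …, β p` (i.e. the columns of `T_{r,ĉ}`) span the column space of
`T_{r,c}`. -/
theorem pascal_maximal_orderedSubPair_columns_span
    (m n p : ℕ) (r c α β : ℕ → ℕ) (hr : StrictMono r) (hc : StrictMono c)
    (hsub : OrderedSubPair r c m n p α β)
    (hmax : ∀ (q : ℕ) (α' β' : ℕ → ℕ), OrderedSubPair r c m n q α' β' → q ≤ p) :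
    Submodule.span ℚ {x : Fin (m + 1) → ℚ | ∃ j ≤ p,
        x = fun i : Fin (m + 1) => ((c (β j)).choose (r (i : ℕ)) : ℚ)} =
      Submodule.span ℚ
        (Set.range fun j : Fin (n + 1) => (pascalSub r c m n).transpose j) := by
  obtain ⟨hα, hβ, hαm, hβn, hrc⟩ := hsub
  set A := pascalSub r c m n with hA
  have hβj : ∀ j : ℕ, j ≤ p → β j ≤ n := fun j hj =>
    le_trans (hβ.monotoneOn (Set.mem_Iic.mpr hj) (Set.mem_Iic.mpr le_rfl) hj) hβn
  have hαj : ∀ j : ℕ, j ≤ p → α j ≤ m := fun j hj =>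
    le_trans (hα.monotoneOn (Set.mem_Iic.mpr hj) (Set.mem_Iic.mpr le_rfl) hj) hαm
  set w : Fin (p+1) → (Fin (m+1) → ℚ) :=
    fun j i => ((c (β (j : ℕ))).choose (r (i : ℕ)) : ℚ) with hw
  have hWset : {x : Fin (m + 1) → ℚ | ∃ j ≤ p,
      x = fun i : Fin (m + 1) => ((c (β j)).choose (r (i : ℕ)) : ℚ)} = Set.range w := by
    ext x
    simp only [Set.mem_setOf_eq, Set.mem_range]
    constructor
    · rintro ⟨j, hj, rfl⟩
      exact ⟨⟨j, by omega⟩, rfl⟩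
    · rintro ⟨j, rfl⟩
      exact ⟨(j : ℕ), by omega, rfl⟩
  rw [hWset]
  -- linear independence of the chosen columns
  have hM0 : (Matrix.of fun i j : Fin (p+1) =>
      ((c (β (j : ℕ))).choose (r (α (i : ℕ))) : ℚ)).det ≠ 0 := by
    apply ne_of_gt
    apply pascal_det_pos p (fun i : Fin (p+1) => r (α (i : ℕ))) (fun j : Fin (p+1) => c (β (j : ℕ)))
    · intro a b hab
      exact hr (hα (Set.mem_Iic.mpr (Nat.lt_succ_iff.mp a.isLt))
        (Set.mem_Iic.mpr (Nat.lt_succ_iff.mp b.isLt)) hab)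
    · intro a b hab
      exact hc (hβ (Set.mem_Iic.mpr (Nat.lt_succ_iff.mp a.isLt))
        (Set.mem_Iic.mpr (Nat.lt_succ_iff.mp b.isLt)) hab)
    · intro i
      exact hrc (i : ℕ) (Nat.lt_succ_iff.mp i.isLt)
  have hli : LinearIndependent ℚ w := by
    rw [Fintype.linearIndependent_iff]
    intro g hg
    have hmv : (Matrix.of fun i j : Fin (p+1) =>
        ((c (β (j : ℕ))).choose (r (α (i : ℕ))) : ℚ)).mulVec g = 0 := by
      funext i
      have h0 := congrFun hg (⟨α (i : ℕ), by have := hαj (i : ℕ) (Nat.lt_succ_iff.mp i.isLt); omega⟩ : Fin (m+1))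
      simp only [Finset.sum_apply, Pi.smul_apply, smul_eq_mul, Pi.zero_apply, hw] at h0
      simp only [Matrix.mulVec, dotProduct, Matrix.of_apply, Pi.zero_apply]
      rw [← h0]
      exact Finset.sum_congr rfl fun j _ => mul_comm _ _
    exact fun i => congrFun (Matrix.eq_zero_of_mulVec_eq_zero hM0 hmv) i
  apply le_antisymm
  · rw [Submodule.span_le]
    rintro x ⟨j, rfl⟩
    apply Submodule.subset_span
    refine ⟨⟨β (j : ℕ), by have := hβj (j : ℕ) (Nat.lt_succ_iff.mp j.isLt); omega⟩, ?_⟩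
    rfl
  · rw [Submodule.span_le]
    rintro x ⟨j, rfl⟩
    show A.transpose j ∈ Submodule.span ℚ (Set.range w)
    by_cases hj : ∃ i ≤ p, β i = (j : ℕ)
    · obtain ⟨i, hip, hie⟩ := hj
      apply Submodule.subset_span
      refine ⟨⟨i, by omega⟩, ?_⟩
      funext i'
      simp [hw, hie, hA, pascalSub]
    · by_contra hu
      have hsnoc : LinearIndependent ℚ (Fin.snoc w (A.transpose j) : Fin (p+2) → (Fin (m+1) → ℚ)) :=
        linearIndependent_fin_snoc.mpr ⟨hli, hu⟩
      set v : Fin (p+2) → (Fin (m+1) → ℚ) := Fin.snoc w (A.transpose j) with hv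
      have hβlt : ∀ l : Fin (p+1), β (l : ℕ) < n + 1 := fun l => by
        have := hβj (l : ℕ) (Nat.lt_succ_iff.mp l.isLt); omega
      set γ : Fin (p+2) → Fin (n+1) :=
        Fin.snoc (fun l : Fin (p+1) => (⟨β (l : ℕ), hβlt l⟩ : Fin (n+1))) j with hγ
      have hvγ : ∀ kk, v kk = A.transpose (γ kk) := by
        intro kk
        induction kk using Fin.lastCases with
        | last => simp [hv, hγ]
        | cast l =>
          simp only [hv, hγ, Fin.snoc_castSucc]
          funext i
          rfl
      have hβinj : ∀ a b : Fin (p+1), β (a : ℕ) = β (b : ℕ) → a = b := by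
        intro a b h
        have := hβ.injOn (Set.mem_Iic.mpr (Nat.lt_succ_iff.mp a.isLt))
          (Set.mem_Iic.mpr (Nat.lt_succ_iff.mp b.isLt)) h
        exact Fin.ext this
      have hγinj : Function.Injective γ := by
        intro a b hab
        rcases Fin.eq_castSucc_or_eq_last a with ⟨a', rfl⟩ | rfl <;>
          rcases Fin.eq_castSucc_or_eq_last b with ⟨b', rfl⟩ | rfl
        · simp only [hγ, Fin.snoc_castSucc] at hab
          rw [hβinj a' b' (congrArg Fin.val hab)]
        · exfalso
          simp only [hγ, Fin.snoc_castSucc, Fin.snoc_last] at hab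
          exact hj ⟨(a' : ℕ), Nat.lt_succ_iff.mp a'.isLt, congrArg Fin.val hab⟩
        · exfalso
          simp only [hγ, Fin.snoc_castSucc, Fin.snoc_last] at hab
          exact hj ⟨(b' : ℕ), Nat.lt_succ_iff.mp b'.isLt, (congrArg Fin.val hab).symm⟩
        · rfl
      set B : Matrix (Fin (m+1)) (Fin (p+2)) ℚ := Matrix.of fun i kk => v kk i with hB
      have hBmv : ∀ t : Fin (p+2) → ℚ, B.mulVec t = 0 → t = 0 := by
        intro t ht
        have h2 : ∑ kk, t kk • v kk = 0 := by
          funext i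
          have h3 := congrFun ht i
          simp only [Matrix.mulVec, dotProduct, Matrix.of_apply, Pi.zero_apply, hB] at h3
          simp only [Finset.sum_apply, Pi.smul_apply, smul_eq_mul, Pi.zero_apply]
          rw [← h3]
          exact Finset.sum_congr rfl fun kk _ => mul_comm _ _
        exact funext (Fintype.linearIndependent_iff.mp hsnoc t h2)
      have hBinj : Function.Injective B.mulVecLin := by
        rw [← LinearMap.ker_eq_bot, eq_bot_iff]
        intro t ht
        rw [LinearMap.mem_ker, Matrix.mulVecLin_apply] at ht
        rw [Submodule.mem_bot]
        exact hBmv t ht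
      have hrank : B.rank = p + 2 := by
        show Module.finrank ℚ ↥(LinearMap.range B.mulVecLin) = p + 2
        rw [LinearMap.finrank_range_of_inj hBinj, Module.finrank_fin_fun]
      have hrowspan : Submodule.span ℚ (Set.range fun i : Fin (m+1) => B i) = ⊤ := by
        apply Submodule.eq_top_of_finrank_eq
        have h2 : LinearMap.range B.transpose.mulVecLin
            = Submodule.span ℚ (Set.range fun i : Fin (m+1) => B i) := by
          rw [Matrix.range_mulVecLin]
          rfl
        have h1 : Module.finrank ℚ
            ↥(Submodule.span ℚ (Set.range fun i : Fin (m+1) => B i)) = p + 2 := by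
          rw [← h2]
          show B.transpose.rank = p + 2
          rw [Matrix.rank_transpose]
          exact hrank
        rw [h1, Module.finrank_fin_fun]
      obtain ⟨b, hbsub, hbspan, hbli⟩ :=
        exists_linearIndependent ℚ (Set.range fun i : Fin (m+1) => B i)
      rw [hrowspan] at hbspan
      haveI : Fintype b := hbli.setFinite.fintype
      have hcard : Fintype.card b = p + 2 := by
        have hbasis : Module.Basis b ℚ (Fin (p+2) → ℚ) :=
          Module.Basis.mk hbli (by rw [Subtype.range_coe]; exact hbspan.ge)
        have h4 := Module.finrank_eq_card_basis hbasis
        rw [Module.finrank_fin_fun] at h4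
        omega
      have e : Fin (p+2) ≃ b := (Fintype.equivFinOfCardEq hcard).symm
      choose ρ0 hρ0 using (fun kk : Fin (p+2) => hbsub (e kk).2)
      have hρ0' : ∀ kk : Fin (p+2), B (ρ0 kk) = ((e kk : b) : Fin (p+2) → ℚ) := hρ0
      have hBρinj : ∀ a b', B (ρ0 a) = B (ρ0 b') → a = b' := by
        intro a b' h
        have h5 : ((e a : b) : Fin (p+2) → ℚ) = ((e b' : b) : Fin (p+2) → ℚ) := by
          rw [← hρ0' a, ← hρ0' b', h]
        exact e.injective (Subtype.ext h5)
      have hρinj : Function.Injective ρ0 := fun a b' h => hBρinj a b' (by rw [h])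
      have hRcard : (Finset.image ρ0 Finset.univ).card = p + 2 := by
        rw [Finset.card_image_of_injective _ hρinj, Finset.card_univ, Fintype.card_fin]
      set ρ := (Finset.image ρ0 Finset.univ).orderEmbOfFin hRcard with hρdef
      have hCcard : (Finset.image γ Finset.univ).card = p + 2 := by
        rw [Finset.card_image_of_injective _ hγinj, Finset.card_univ, Fintype.card_fin]
      set γs := (Finset.image γ Finset.univ).orderEmbOfFin hCcard with hγsdef
      -- rows of S are elements of b
      set S : Matrix (Fin (p+2)) (Fin (p+2)) ℚ := Matrix.of fun a l => B (ρ a) l with hS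
      have hmemb : ∀ a : Fin (p+2), B (ρ a) ∈ b := by
        intro a
        have h6 : ρ a ∈ Finset.image ρ0 Finset.univ :=
          Finset.orderEmbOfFin_mem _ hRcard a
        obtain ⟨a', _, ha'⟩ := Finset.mem_image.mp h6
        rw [← ha', hρ0' a']
        exact (e a').2
      set g : Fin (p+2) → b := fun a => ⟨B (ρ a), hmemb a⟩ with hg
      have hginj : Function.Injective g := by
        intro a a' h
        have h7 : B (ρ a) = B (ρ a') := congrArg Subtype.val h
        have h8 : ρ a ∈ Finset.image ρ0 Finset.univ := Finset.orderEmbOfFin_mem _ hRcard a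
        have h9 : ρ a' ∈ Finset.image ρ0 Finset.univ := Finset.orderEmbOfFin_mem _ hRcard a'
        obtain ⟨a1, _, ha1⟩ := Finset.mem_image.mp h8
        obtain ⟨a2, _, ha2⟩ := Finset.mem_image.mp h9
        have h10 : a1 = a2 := hBρinj a1 a2 (by rw [ha1, ha2]; exact h7)
        have h11 : ρ a = ρ a' := by rw [← ha1, ← ha2, h10]
        exact ρ.injective h11
      have hSrows : LinearIndependent ℚ (fun a => S a) := by
        have h12 : (fun a => S a) = (fun x : b => (x : Fin (p+2) → ℚ)) ∘ g := by
          funext a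
          rfl
        rw [h12]
        exact hbli.comp g hginj
      have hSdet : S.det ≠ 0 := by
        have h13 : IsUnit S := Matrix.linearIndependent_rows_iff_isUnit.mp hSrows
        have h14 : IsUnit S.det := (Matrix.isUnit_iff_isUnit_det S).mp h13
        exact h14.ne_zero
      -- column permutation
      have hγsmem : ∀ l : Fin (p+2), ∃ a, γ a = γs l := by
        intro l
        have := Finset.orderEmbOfFin_mem _ hCcard l
        obtain ⟨a, _, ha⟩ := Finset.mem_image.mp this
        exact ⟨a, ha⟩
      choose π hπ using hγsmem
      have hπinj : Function.Injective π := by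
        intro a b' h
        have : γs a = γs b' := by rw [← hπ a, ← hπ b', h]
        exact γs.injective this
      have hπbij : Function.Bijective π := (Finite.injective_iff_bijective).mp hπinj
      set πe : Equiv.Perm (Fin (p+2)) := Equiv.ofBijective π hπbij with hπe
      set S' : Matrix (Fin (p+2)) (Fin (p+2)) ℚ :=
        Matrix.of fun a l => ((c ((γs l : Fin (n+1)) : ℕ)).choose (r ((ρ a : Fin (m+1)) : ℕ)) : ℚ) with hS'
      have hS'eq : S' = S.submatrix id πe := by
        ext a l
        show ((c ((γs l : Fin (n+1)) : ℕ)).choose (r ((ρ a : Fin (m+1)) : ℕ)) : ℚ) = S a (πe l)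
        have h15 : S a (πe l) = B (ρ a) (π l) := rfl
        have h16 : B (ρ a) (π l) = v (π l) (ρ a) := rfl
        rw [h15, h16, hvγ (π l), hπ l]
        rfl
      have hS'det : S'.det ≠ 0 := by
        rw [hS'eq, Matrix.det_permute']
        rcases Int.units_eq_one_or (Equiv.Perm.sign πe) with h17 | h17 <;>
          rw [h17] <;> simpa using hSdet
      have hord : ∀ i : Fin (p+2), r ((ρ i : Fin (m+1)) : ℕ) ≤ c ((γs i : Fin (n+1)) : ℕ) := by
        apply pascal_det_le (p+2) (fun i => r ((ρ i : Fin (m+1)) : ℕ))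
          (fun i => c ((γs i : Fin (n+1)) : ℕ))
        · intro a b' hab
          exact hr (ρ.strictMono hab)
        · intro a b' hab
          exact hc (γs.strictMono hab)
        · exact hS'det
      -- build the longer ordered sub-pair
      set α' : ℕ → ℕ := fun i => ((ρ (⟨min i (p+1), by omega⟩ : Fin (p+2)) : Fin (m+1)) : ℕ) with hα'
      set β' : ℕ → ℕ := fun i => ((γs (⟨min i (p+1), by omega⟩ : Fin (p+2)) : Fin (n+1)) : ℕ) with hβ'
      have hosp : OrderedSubPair r c m n (p+1) α' β' := by
        refine ⟨?_, ?_, ?_, ?_, ?_⟩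
        · intro a ha b' hb' hab
          rw [Set.mem_Iic] at ha hb'
          show ((ρ (⟨min a (p+1), by omega⟩ : Fin (p+2)) : Fin (m+1)) : ℕ) < ((ρ (⟨min b' (p+1), by omega⟩ : Fin (p+2)) : Fin (m+1)) : ℕ)
          have : (⟨min a (p+1), by omega⟩ : Fin (p+2)) < ⟨min b' (p+1), by omega⟩ := by
            rw [Fin.lt_def]
            simp
            omega
          exact ρ.strictMono this
        · intro a ha b' hb' hab
          rw [Set.mem_Iic] at ha hb'
          show ((γs (⟨min a (p+1), by omega⟩ : Fin (p+2)) : Fin (n+1)) : ℕ) < ((γs (⟨min b' (p+1), by omega⟩ : Fin (p+2)) : Fin (n+1)) : ℕ)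
          have : (⟨min a (p+1), by omega⟩ : Fin (p+2)) < ⟨min b' (p+1), by omega⟩ := by
            rw [Fin.lt_def]
            simp
            omega
          exact γs.strictMono this
        · show ((ρ ⟨min (p+1) (p+1), by omega⟩ : Fin (m+1)) : ℕ) ≤ m
          have := (ρ ⟨min (p+1) (p+1), by omega⟩ : Fin (m+1)).isLt
          omega
        · show ((γs ⟨min (p+1) (p+1), by omega⟩ : Fin (n+1)) : ℕ) ≤ n
          have := (γs ⟨min (p+1) (p+1), by omega⟩ : Fin (n+1)).isLt
          omega
        · intro i hi
          show r ((ρ (⟨min i (p+1), by omega⟩ : Fin (p+2)) : Fin (m+1)) : ℕ) ≤ c ((γs (⟨min i (p+1), by omega⟩ : Fin (p+2)) : Fin (n+1)) : ℕ)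
          exact hord ⟨min i (p+1), by omega⟩
      have := hmax (p+1) α' β' hosp
      omega
end

section
/- Let r = [r_0, ..., r_m] and c = [c_0, ..., c_n] be strictly increasing sequences of natural numbers with r_0 ≤ c_n. Define β_0 to be the least k with r_0 ≤ c_k, and recursively, for each i ≥ 1 with r_i ≤ c_n, define β_i to be the maximum of (the least k with r_i ≤ c_k) and β_{i-1} + 1. Let p be the largest index i for which β_i is defined and β_i ≤ n. Then the pair {[r_0, ..., r_p], [c_{β_0}, ..., c_{β_p}]} is a maximal ordered sub-pair for {r, c}. -/
/-- The column indices produced by the algorithm: `algBeta r c 0` is the least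
`k` with `r 0 ≤ c k`, and `algBeta r c (i+1)` is the maximum of the least `k`
with `r (i+1) ≤ c k` and `algBeta r c i + 1`. -/
noncomputable def algBeta (r c : ℕ → ℕ) : ℕ → ℕ
  | 0 => sInf {k | r 0 ≤ c k}
  | i + 1 => max (sInf {k | r (i + 1) ≤ c k}) (algBeta r c i + 1)

lemma algBeta_succ (r c : ℕ → ℕ) (i : ℕ) :
    algBeta r c (i + 1) = max (sInf {k | r (i + 1) ≤ c k}) (algBeta r c i + 1) := rfl

lemma sInf_le_algBeta (r c : ℕ → ℕ) (i : ℕ) :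
    sInf {k | r i ≤ c k} ≤ algBeta r c i := by
  cases i with
  | zero => exact le_rfl
  | succ j => exact le_max_left _ _

lemma algBeta_spec (r c : ℕ → ℕ) (hc : StrictMono c) (i : ℕ) :
    r i ≤ c (algBeta r c i) := by
  have hne : {k | r i ≤ c k}.Nonempty := ⟨r i, hc.le_apply⟩
  have h1 : r i ≤ c (sInf {k | r i ≤ c k}) := csInf_mem hne
  exact h1.trans (hc.monotone (sInf_le_algBeta r c i))

lemma algBeta_strictMono (r c : ℕ → ℕ) : StrictMono (algBeta r c) :=
  strictMono_nat_of_lt_succ fun i =>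
    lt_of_lt_of_le (Nat.lt_succ_self _) (algBeta_succ r c i ▸ le_max_right _ _)

lemma strictMonoOn_id_le {α' : ℕ → ℕ} {q : ℕ} (hα : StrictMonoOn α' (Set.Iic q)) :
    ∀ i ≤ q, i ≤ α' i := by
  intro i hi
  induction i with
  | zero => exact Nat.zero_le _
  | succ j ih =>
    have hj : j ≤ q := Nat.le_of_succ_le hi
    have h1 := hα (Set.mem_Iic.mpr hj) (Set.mem_Iic.mpr hi) (Nat.lt_succ_self j)
    have h2 := ih hj
    omega

lemma algBeta_le (r c : ℕ → ℕ) (hr : StrictMono r)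
    (q : ℕ) (α' β' : ℕ → ℕ) (hα : StrictMonoOn α' (Set.Iic q))
    (hβ : StrictMonoOn β' (Set.Iic q))
    (hrc : ∀ i ≤ q, r (α' i) ≤ c (β' i)) :
    ∀ i ≤ q, algBeta r c i ≤ β' i := by
  intro i
  induction i with
  | zero =>
    intro h0q
    have hmem : β' 0 ∈ {k | r 0 ≤ c k} :=
      le_trans (hr.monotone (Nat.zero_le _)) (hrc 0 h0q)
    exact Nat.sInf_le hmem
  | succ j ih =>
    intro hjq
    have hj : j ≤ q := Nat.le_of_succ_le hjq
    have h1 : sInf {k | r (j + 1) ≤ c k} ≤ β' (j + 1) :=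
      Nat.sInf_le (le_trans (hr.monotone (strictMonoOn_id_le hα (j + 1) hjq)) (hrc (j + 1) hjq))
    have h2 : algBeta r c j + 1 ≤ β' (j + 1) := by
      have hb := hβ (Set.mem_Iic.mpr hj) (Set.mem_Iic.mpr hjq) (Nat.lt_succ_self j)
      have := ih hj
      omega
    rw [algBeta_succ]
    exact max_le h1 h2

/-- If `r 0 ≤ c n` and `p` is the largest index `i ≤ m` for which the
algorithm's value `β i` satisfies `β i ≤ n`, then the pair
`{[r 0, …, r p], [c (β 0), …, c (β p)]}` is a maximal ordered sub-pair for
`{[r 0, …, r m], [c 0, …, c n]}`. -/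
theorem pascal_algorithm_maximal_orderedSubPair
    (m n : ℕ) (r c : ℕ → ℕ) (hr : StrictMono r) (hc : StrictMono c)
    (h0 : r 0 ≤ c n)
    (p : ℕ) (hp : p = sSup {i | i ≤ m ∧ algBeta r c i ≤ n}) :
    OrderedSubPair r c m n p id (algBeta r c) ∧
      ∀ (q : ℕ) (α' β' : ℕ → ℕ), OrderedSubPair r c m n q α' β' → q ≤ p := by
  set S : Set ℕ := {i | i ≤ m ∧ algBeta r c i ≤ n} with hS
  have h0S : (0 : ℕ) ∈ S := ⟨Nat.zero_le _, Nat.sInf_le h0⟩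
  have hbdd : BddAbove S := ⟨m, fun i hi => hi.1⟩
  have hpS : p ∈ S := hp ▸ Nat.sSup_mem ⟨0, h0S⟩ hbdd
  constructor
  · exact ⟨fun a _ b _ h => h, (algBeta_strictMono r c).strictMonoOn _, hpS.1, hpS.2,
      fun i _ => algBeta_spec r c hc i⟩
  · rintro q α' β' ⟨hα, hβ, hαm, hβn, hrc⟩
    have hqm : q ≤ m := le_trans (strictMonoOn_id_le hα q le_rfl) hαm
    have hqn : algBeta r c q ≤ n :=
      le_trans (algBeta_le r c hr q α' β' hα hβ hrc q le_rfl) hβn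
    exact hp ▸ le_csSup hbdd ⟨hqm, hqn⟩
end

section
/- Let r = [r_0, ..., r_m] and c = [c_0, ..., c_n] be strictly increasing sequences of natural numbers with r_0 ≤ c_n. Then there exists a maximal ordered sub-pair {r̂, ĉ} for {r, c} whose row part r̂ is an initial segment of r, i.e., r̂ = [r_0, r_1, ..., r_p] for some p. -/
/-- If `r 0 ≤ c n`, then there is a maximal ordered sub-pair for
`{[r 0, …, r m], [c 0, …, c n]}` whose row part is an initial segment
`[r 0, …, r p]` of `r` (i.e. the row selection is the identity). -/
theorem pascal_exists_maximal_orderedSubPair_initial_rows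
    (m n : ℕ) (r c : ℕ → ℕ) (hr : StrictMono r) (hc : StrictMono c)
    (h0 : r 0 ≤ c n) :
    ∃ (p : ℕ) (β : ℕ → ℕ), OrderedSubPair r c m n p id β ∧
      ∀ (q : ℕ) (α' β' : ℕ → ℕ), OrderedSubPair r c m n q α' β' → q ≤ p := by
  classical
  -- any strictly increasing index selection satisfies `i ≤ α i`
  have key : ∀ (q : ℕ) (α : ℕ → ℕ), StrictMonoOn α (Set.Iic q) → ∀ i ≤ q, i ≤ α i := by
    intro q α hα i
    induction i with
    | zero => intro _; exact Nat.zero_le _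
    | succ i ih =>
      intro hi
      have h1 : α i < α (i + 1) :=
        hα (le_trans (Nat.le_succ i) hi) hi (Nat.lt_succ_self i)
      have h2 : i ≤ α i := ih (le_trans (Nat.le_succ i) hi)
      omega
  set P : ℕ → Prop := fun q => ∃ β, OrderedSubPair r c m n q id β with hP
  have hP0 : P 0 := by
    refine ⟨fun _ => n, ?_, ?_, Nat.zero_le _, le_refl n, ?_⟩
    · intro a ha b hb hab
      simp [Set.mem_Iic] at ha hb; omega
    · intro a ha b hb hab
      simp [Set.mem_Iic] at ha hb; omega
    · intro i hi
      interval_cases i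
      simpa using h0
  -- any ordered sub-pair of length q+1 gives one with identity rows
  have conv : ∀ (q : ℕ) (α' β' : ℕ → ℕ), OrderedSubPair r c m n q α' β' →
      q ≤ m ∧ P q := by
    intro q α' β' ⟨hα, hβ, hαm, hβn, hrc⟩
    have hle : ∀ i ≤ q, i ≤ α' i := key q α' hα
    have hqm : q ≤ m := le_trans (hle q le_rfl) hαm
    refine ⟨hqm, β', ?_, hβ, hqm, hβn, ?_⟩
    · intro a _ b _ hab; simpa using hab
    · intro i hi
      exact le_trans (hr.monotone (hle i hi)) (hrc i hi)
  refine ⟨Nat.findGreatest P m, ?_⟩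
  obtain ⟨β, hβ⟩ := Nat.findGreatest_spec (Nat.zero_le m) hP0
  exact ⟨β, hβ, fun q α' β' h =>
    Nat.le_findGreatest (conv q α' β' h).1 (conv q α' β' h).2⟩
end

section
/- Let r = [r_0, ..., r_m] and c = [c_0, ..., c_n] be strictly increasing sequences of natural numbers with r_0 ≤ c_n, and let {r̂, ĉ} be an ordered sub-pair for {r, c} of length p+1. Then the (m+1)×(p+1) real matrix A with (i,j) entry (1/r_i!) · D^{r_i}[x ↦ x^{ĉ_j}](1) has full column rank, i.e., rank(A) = p+1. -/
open Matrix Finset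

/-- The binomial-coefficient matrix with entries `C(b j, a i)`. -/
private def chooseMat {q : ℕ} (a b : Fin q → ℕ) : Matrix (Fin q) (Fin q) ℝ :=
  Matrix.of fun i j => (Nat.choose (b j) (a i) : ℝ)

private lemma chooseMat_apply {q : ℕ} (a b : Fin q → ℕ) (i j : Fin q) :
    chooseMat a b i j = (Nat.choose (b j) (a i) : ℝ) := rfl

/-- Hockey stick, real version on `Ico`. -/
private lemma sum_Ico_choose_real (j : ℕ) {x y : ℕ} (h : x ≤ y) :
    ∑ t ∈ Finset.Ico x y, ((t.choose j : ℝ)) =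
      (y.choose (j+1) : ℝ) - (x.choose (j+1) : ℝ) := by
  induction y, h using Nat.le_induction with
  | base => simp
  | succ y hy ih =>
      rw [Finset.sum_Ico_succ_top hy, ih, Nat.choose_succ_succ]
      push_cast
      ring

private lemma chooseMat_det (q : ℕ) :
    ∀ (a b : Fin q → ℕ), StrictMono a → StrictMono b →
      0 ≤ (chooseMat a b).det ∧ ((∀ i, a i ≤ b i) → 0 < (chooseMat a b).det) := by
  induction q with
  | zero =>
      intro a b _ _
      rw [Matrix.det_fin_zero]
      exact ⟨zero_le_one, fun _ => zero_lt_one⟩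
  | succ s IH =>
      suffices key : ∀ (k : ℕ) (a b : Fin (s+1) → ℕ), a 0 = k → StrictMono a →
          StrictMono b →
          0 ≤ (chooseMat a b).det ∧ ((∀ i, a i ≤ b i) → 0 < (chooseMat a b).det) by
        intro a b ha hb; exact key (a 0) a b rfl ha hb
      intro k
      induction k with
      | succ k IHk =>
          intro a b ha0 ha hb
          have ha1 : ∀ i, 1 ≤ a i := fun i => by
            have := ha.monotone (Fin.zero_le i); omega
          by_cases hb0 : b 0 = 0
          · -- first column is zero
            have hz : ∀ i, chooseMat a b i 0 = 0 := by
              intro i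
              rw [chooseMat_apply, hb0, Nat.choose_eq_zero_of_lt (ha1 i)]
              simp
            have hdet : (chooseMat a b).det = 0 :=
              Matrix.det_eq_zero_of_column_eq_zero 0 hz
            refine ⟨le_of_eq hdet.symm, fun hab => absurd (hab 0) ?_⟩
            omega
          · have hb1 : ∀ j, 1 ≤ b j := fun j => by
              have := hb.monotone (Fin.zero_le j); omega
            set a' : Fin (s+1) → ℕ := fun i => a i - 1 with ha'
            set b' : Fin (s+1) → ℕ := fun j => b j - 1 with hb'
            have ha's : StrictMono a' := fun i j hij => by
              have := ha hij; have := ha1 i; simp only [ha']; omega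
            have hb's : StrictMono b' := fun i j hij => by
              have := hb hij; have := hb1 i; simp only [hb']; omega
            have hfac : chooseMat a b =
                Matrix.diagonal (fun i => ((a i : ℝ))⁻¹) * chooseMat a' b' *
                  Matrix.diagonal (fun j => (b j : ℝ)) := by
              ext i j
              rw [Matrix.mul_diagonal, Matrix.diagonal_mul, chooseMat_apply,
                chooseMat_apply]
              have hnat : b j * Nat.choose (b j - 1) (a i - 1)
                  = Nat.choose (b j) (a i) * a i := by
                have := Nat.add_one_mul_choose_eq (b j - 1) (a i - 1)
                have h1 : b j - 1 + 1 = b j := by have := hb1 j; omega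
                have h2 : a i - 1 + 1 = a i := by have := ha1 i; omega
                rw [h1, h2] at this
                exact this
              have hai : ((a i : ℝ)) ≠ 0 := by
                have := ha1 i; positivity
              field_simp
              have := congrArg (fun t : ℕ => (t : ℝ)) hnat
              push_cast at this
              linarith [this]
            rw [hfac, Matrix.det_mul, Matrix.det_mul, Matrix.det_diagonal,
              Matrix.det_diagonal]
            have ha'0 : a' 0 = k := by simp only [ha']; omega
            obtain ⟨h1, h2⟩ := IHk a' b' ha'0 ha's hb's
            have hprod1 : 0 < ∏ i : Fin (s+1), ((a i : ℝ))⁻¹ := by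
              apply Finset.prod_pos
              intro i _
              have := ha1 i
              have : (0:ℝ) < a i := by positivity
              positivity
            have hprod2 : 0 < ∏ j : Fin (s+1), ((b j : ℝ)) := by
              apply Finset.prod_pos
              intro j _
              have := hb1 j
              positivity
            constructor
            · have := mul_nonneg (mul_nonneg hprod1.le h1) hprod2.le
              linarith [this]
            · intro hab
              have hab' : ∀ i, a' i ≤ b' i := fun i => by
                have := hab i; simp only [ha', hb']; omega
              have := mul_pos (mul_pos hprod1 (h2 hab')) hprod2
              linarith [this]
      | zero =>
          intro a b ha0 ha hb
          -- expansion step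
          have ha1 : ∀ i : Fin s, 1 ≤ a i.succ := fun i => by
            have := ha (Fin.succ_pos i); omega
          set M := chooseMat a b with hM
          -- the unipotent column-operation matrix
          set U : Matrix (Fin (s+1)) (Fin (s+1)) ℝ :=
            Matrix.of fun t j =>
              Fin.cases (if t = 0 then (1:ℝ) else 0)
                (fun j' => if t = j'.succ then (1:ℝ)
                  else if t = j'.castSucc then -1 else 0) j with hU
          have hUapp0 : ∀ t, U t 0 = if t = 0 then (1:ℝ) else 0 := fun t => rfl
          have hUappS : ∀ t (j' : Fin s), U t j'.succ =
              (if t = j'.succ then (1:ℝ) else 0) +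
                (if t = j'.castSucc then -1 else 0) := by
            intro t j'
            have hne : (j'.succ : Fin (s+1)) ≠ j'.castSucc :=
              (Fin.castSucc_lt_succ (i := j')).ne'
            show (if t = j'.succ then (1:ℝ) else if t = j'.castSucc then -1 else 0) = _
            by_cases h1 : t = j'.succ
            · subst h1; simp [hne]
            · simp [h1]
          have hUtri : U.BlockTriangular id := by
            intro t j hlt
            simp only [id] at hlt
            induction j using Fin.cases with
            | zero => rw [hUapp0, if_neg]; exact fun h => by subst h; exact absurd hlt (lt_irrefl _)
            | succ j' =>
                rw [hUappS]
                rw [if_neg, if_neg]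
                · ring
                · intro h; subst h
                  exact absurd (Fin.castSucc_lt_succ (i := j')) (by
                    intro hcs; exact absurd (hcs.trans hlt) (lt_irrefl _))
                · intro h; subst h; exact absurd hlt (lt_irrefl _)
          have hUdiag : ∀ j, U j j = 1 := by
            intro j
            induction j using Fin.cases with
            | zero => rw [hUapp0, if_pos rfl]
            | succ j' =>
                rw [hUappS, if_pos rfl, if_neg (Fin.castSucc_lt_succ (i := j')).ne', add_zero]
          have hUdet : U.det = 1 := by
            rw [Matrix.det_of_upperTriangular hUtri]
            simp [hUdiag]
          -- entries of M * U
          have hMU0 : ∀ i, (M * U) i 0 = M i 0 := by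
            intro i
            rw [Matrix.mul_apply]
            simp only [hUapp0, mul_ite, mul_one, mul_zero]
            rw [Finset.sum_ite_eq' Finset.univ 0 (fun t => M i t)]
            simp
          have hMUS : ∀ i (j' : Fin s),
              (M * U) i j'.succ = M i j'.succ - M i j'.castSucc := by
            intro i j'
            rw [Matrix.mul_apply]
            simp only [hUappS, mul_add, mul_ite, mul_one, mul_zero, mul_neg]
            rw [Finset.sum_add_distrib,
              Finset.sum_ite_eq' Finset.univ (j'.succ) (fun t => M i t),
              Finset.sum_ite_eq' Finset.univ (j'.castSucc) (fun t => -(M i t))]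
            simp [sub_eq_add_neg]
          -- reduced data
          set a'' : Fin s → ℕ := fun i => a i.succ - 1 with ha''
          have ha''s : StrictMono a'' := fun i i' h => by
            have h1 := ha (Fin.succ_lt_succ_iff.mpr h)
            have h2 := ha1 i
            simp only [ha'']; omega
          set T : Fin s → Finset ℕ := fun j => Finset.Ico (b j.castSucc) (b j.succ) with hT
          set v : ℕ → (Fin s → ℝ) := fun t i => (Nat.choose t (a'' i) : ℝ) with hv
          have hb00 : M 0 0 = 1 := by
            rw [hM, chooseMat_apply, ha0]; simp
          have hdetMU : (M * U).det = M.det := by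
            rw [Matrix.det_mul, hUdet, mul_one]
          have hexp : M.det = ((M * U).submatrix Fin.succ Fin.succ).det := by
            have h1 : ∀ j : Fin (s+1), j ∈ Finset.univ → j ≠ 0 →
                (-1:ℝ)^(j:ℕ) * (M * U) 0 j *
                  ((M * U).submatrix Fin.succ j.succAbove).det = 0 := by
              intro j _ hj
              induction j using Fin.cases with
              | zero => exact absurd rfl hj
              | succ j' =>
                  rw [hMUS]
                  have hz : M 0 j'.succ - M 0 j'.castSucc = 0 := by
                    rw [hM, chooseMat_apply, chooseMat_apply, ha0]; simp
                  rw [hz]; ring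
            rw [← hdetMU, Matrix.det_succ_row_zero,
              Finset.sum_eq_single (0 : Fin (s+1)) h1
                (fun h => absurd (Finset.mem_univ _) h),
              hMU0, hb00]
            simp
          have hentry : ∀ (i j : Fin s),
              ((M * U).submatrix Fin.succ Fin.succ)ᵀ j i = ∑ t ∈ T j, v t i := by
            intro i j
            rw [Matrix.transpose_apply, Matrix.submatrix_apply, hMUS, hM,
              chooseMat_apply, chooseMat_apply]
            have hle : b j.castSucc ≤ b j.succ := (hb (Fin.castSucc_lt_succ (i := j))).le
            have h2 : a i.succ - 1 + 1 = a i.succ := by have := ha1 i; omega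
            have hhs := sum_Ico_choose_real (a i.succ - 1) hle
            rw [h2] at hhs
            rw [hT, hv]
            simp only [ha'']
            rw [hhs]
          have hfun : ((M * U).submatrix Fin.succ Fin.succ)ᵀ
              = fun j => ∑ t ∈ T j, v t := by
            ext j i
            rw [Finset.sum_apply]
            exact hentry i j
          have hsum : M.det = ∑ g ∈ Fintype.piFinset T, (chooseMat a'' g).det := by
            rw [hexp, ← Matrix.det_transpose, hfun]
            show (Matrix.detRowAlternating : (Fin s → ℝ) [⋀^Fin s]→ₗ[ℝ] ℝ).toMultilinearMap
              (fun j => ∑ t ∈ T j, v t) = _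
            rw [MultilinearMap.map_sum_finset
              (Matrix.detRowAlternating : (Fin s → ℝ) [⋀^Fin s]→ₗ[ℝ] ℝ).toMultilinearMap
              (fun _ t => v t) T]
            refine Finset.sum_congr rfl fun g _ => ?_
            have : (fun j => v (g j)) = ((chooseMat a'' g)ᵀ : Matrix (Fin s) (Fin s) ℝ) := rfl
            show ((chooseMat a'' g)ᵀ : Matrix (Fin s) (Fin s) ℝ).det = _
            rw [Matrix.det_transpose]
          have hgs : ∀ {g : Fin s → ℕ}, (∀ j, g j ∈ T j) → StrictMono g := by
            intro g hg j j' hjj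
            have h1 := (Finset.mem_Ico.mp (hg j)).2
            have h2 := (Finset.mem_Ico.mp (hg j')).1
            have h3 : b j.succ ≤ b j'.castSucc := by
              apply hb.monotone
              rw [Fin.le_def]
              rw [Fin.lt_def] at hjj
              simp only [Fin.val_succ, Fin.coe_castSucc]
              omega
            omega
          constructor
          · rw [hsum]
            apply Finset.sum_nonneg
            intro g hg
            exact (IH a'' g ha''s (hgs (Fintype.mem_piFinset.mp hg))).1
          · intro hab
            rw [hsum]
            have hg0mem : (fun j => b j.succ - 1) ∈ Fintype.piFinset T := by
              rw [Fintype.mem_piFinset]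
              intro j
              rw [hT]
              simp only
              rw [Finset.mem_Ico]
              have := hb (Fin.castSucc_lt_succ (i := j))
              omega
            apply Finset.sum_pos'
            · intro g hg
              exact (IH a'' g ha''s (hgs (Fintype.mem_piFinset.mp hg))).1
            · refine ⟨_, hg0mem, ?_⟩
              apply (IH a'' _ ha''s (hgs (Fintype.mem_piFinset.mp hg0mem))).2
              intro i
              have h1 := hab i.succ
              have h2 := ha1 i
              simp only [ha'']
              omega

private lemma iteratedDeriv_pow' (n : ℕ) : ∀ k : ℕ,
    iteratedDeriv k (fun x : ℝ => x ^ n) = fun x => (n.descFactorial k : ℝ) * x ^ (n - k) := by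
  intro k
  induction k with
  | zero => funext x; simp
  | succ k ih =>
      funext x
      rw [iteratedDeriv_succ, ih]
      have hder : deriv (fun x : ℝ => (n.descFactorial k : ℝ) * x ^ (n - k)) x
          = (n.descFactorial k : ℝ) * (((n - k : ℕ) : ℝ) * x ^ (n - k - 1)) := by
        rw [deriv_const_mul_field, deriv_pow_field]
      rw [hder, Nat.descFactorial_succ, Nat.cast_mul,
        show n - (k+1) = n - k - 1 from (Nat.sub_sub n k 1).symm]
      ring

/-- If `r 0 ≤ c n` and `{r ∘ α, c ∘ β}` is an ordered sub-pair of length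
`p + 1` for `{[r 0, …, r m], [c 0, …, c n]}`, then the `(m+1) × (p+1)` real
matrix `A = Λ_{1,r}ᵀ V_ĉ`, with `(i,j)` entry
`D^{r i}[x ↦ x ^ (c (β j))](1) / r i !`, has full column rank `p + 1`. -/
theorem generalizedVandermonde_orderedSubPair_full_column_rank
    (m n p : ℕ) (r c α β : ℕ → ℕ) (hr : StrictMono r) (hc : StrictMono c)
    (h0 : r 0 ≤ c n) (hsub : OrderedSubPair r c m n p α β) :
    (Matrix.of fun (i : Fin (m + 1)) (j : Fin (p + 1)) =>
        iteratedDeriv (r (i : ℕ)) (fun x : ℝ => x ^ c (β (j : ℕ))) 1 /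
          (Nat.factorial (r (i : ℕ)))).rank = p + 1 := by
  obtain ⟨hα, hβ, hαp, hβp, hrc⟩ := hsub
  have hA : (Matrix.of fun (i : Fin (m + 1)) (j : Fin (p + 1)) =>
        iteratedDeriv (r (i : ℕ)) (fun x : ℝ => x ^ c (β (j : ℕ))) 1 /
          (Nat.factorial (r (i : ℕ)))) =
      Matrix.of fun (i : Fin (m+1)) (j : Fin (p+1)) =>
        ((Nat.choose (c (β (j:ℕ))) (r (i:ℕ)) : ℝ)) := by
    ext i j
    simp only [Matrix.of_apply]
    rw [iteratedDeriv_pow']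
    simp only [one_pow, mul_one]
    rw [Nat.descFactorial_eq_factorial_mul_choose]
    push_cast
    rw [mul_comm, mul_div_assoc, div_self
      (Nat.cast_ne_zero.mpr (Nat.factorial_ne_zero _)), mul_one]
  rw [hA]
  set A : Matrix (Fin (m+1)) (Fin (p+1)) ℝ :=
    Matrix.of fun (i : Fin (m+1)) (j : Fin (p+1)) =>
      ((Nat.choose (c (β (j:ℕ))) (r (i:ℕ)) : ℝ)) with hAdef
  have hαm : ∀ i : Fin (p+1), α (i : ℕ) ≤ m := by
    intro i
    refine le_trans (le_trans ?_ (le_refl (α p))) hαp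
    rcases eq_or_lt_of_le (Fin.is_le i) with h | h
    · rw [h]
    · exact (hα (Set.mem_Iic.mpr (le_of_lt h)) (Set.mem_Iic.mpr le_rfl) h).le
  set f : Fin (p+1) → Fin (m+1) := fun i => ⟨α (i : ℕ), Nat.lt_succ_of_le (hαm i)⟩ with hf
  set aF : Fin (p+1) → ℕ := fun i => r (α (i : ℕ)) with haF
  set bF : Fin (p+1) → ℕ := fun j => c (β (j : ℕ)) with hbF
  have haFs : StrictMono aF := by
    intro i i' h
    apply hr
    exact hα (Set.mem_Iic.mpr (Fin.is_le i)) (Set.mem_Iic.mpr (Fin.is_le i')) h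
  have hbFs : StrictMono bF := by
    intro i i' h
    apply hc
    exact hβ (Set.mem_Iic.mpr (Fin.is_le i)) (Set.mem_Iic.mpr (Fin.is_le i')) h
  have hdet : 0 < (chooseMat aF bF).det :=
    (chooseMat_det (p+1) aF bF haFs hbFs).2 (fun i => hrc (i : ℕ) (Fin.is_le i))
  set P : Matrix (Fin (p+1)) (Fin (m+1)) ℝ :=
    Matrix.of fun i k => if k = f i then (1:ℝ) else 0 with hP
  have hPA : P * A = chooseMat aF bF := by
    ext i j
    rw [Matrix.mul_apply, chooseMat_apply]
    simp only [hP, hAdef, Matrix.of_apply, ite_mul, one_mul, zero_mul]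
    rw [Finset.sum_ite_eq' Finset.univ (f i)
      (fun k => ((Nat.choose (c (β (j:ℕ))) (r (k:ℕ)) : ℝ)))]
    simp [hf, haF, hbF]
  have hrankS : (chooseMat aF bF).rank = p + 1 := by
    rw [Matrix.rank_of_isUnit _ ((Matrix.isUnit_iff_isUnit_det _).2
      (isUnit_iff_ne_zero.mpr (ne_of_gt hdet)))]
    simp
  apply le_antisymm
  · simpa using Matrix.rank_le_card_width A
  · calc p + 1 = (chooseMat aF bF).rank := hrankS.symm
      _ = (P * A).rank := by rw [hPA]
      _ ≤ A.rank := Matrix.rank_mul_le_right P A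
end

section
/- Let r = [r_0, ..., r_m] and c = [c_0, ..., c_n] be strictly increasing sequences of natural numbers, and let {r̂, ĉ} be a maximal ordered sub-pair for {r, c} of length p+1. Then every (p+2)×(p+2) square submatrix of the matrix T_{r,c} (with (i,j) entry C(c_j, r_i)), obtained by selecting any p+2 rows and any p+2 columns, is singular. -/
/-- If `{r ∘ α, c ∘ β}` is a maximal ordered sub-pair of length `p + 1` for
`{[r 0, …, r m], [c 0, …, c n]}`, then every `(p+2) × (p+2)` square submatrix of
`T_{r,c}`, obtained by selecting any `p + 2` rows (via a strictly increasing
index selection `α'`) and any `p + 2` columns (via `β'`), is singular. -/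
theorem pascal_submatrix_singular_of_maximal_orderedSubPair
    (m n p : ℕ) (r c α β : ℕ → ℕ) (hr : StrictMono r) (hc : StrictMono c)
    (hsub : OrderedSubPair r c m n p α β)
    (hmax : ∀ (q : ℕ) (α' β' : ℕ → ℕ), OrderedSubPair r c m n q α' β' → q ≤ p)
    (α' β' : ℕ → ℕ)
    (hα' : StrictMonoOn α' (Set.Iic (p + 1)))
    (hβ' : StrictMonoOn β' (Set.Iic (p + 1)))
    (hα'm : α' (p + 1) ≤ m) (hβ'n : β' (p + 1) ≤ n) :
    (Matrix.of fun i j : Fin (p + 2) =>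
        ((c (β' (j : ℕ))).choose (r (α' (i : ℕ))) : ℚ)).det = 0 := by
  -- Since the maximal ordered sub-pair has length p+1, (α', β') cannot be an
  -- ordered sub-pair of length p+2, so there is k ≤ p+1 with c (β' k) < r (α' k).
  have hk : ∃ k ≤ p + 1, c (β' k) < r (α' k) := by
    by_contra h
    push_neg at h
    have : OrderedSubPair r c m n (p + 1) α' β' :=
      ⟨hα', hβ', hα'm, hβ'n, fun i hi => h i hi⟩
    exact absurd (hmax (p + 1) α' β' this) (by omega)
  obtain ⟨k, hkp, hklt⟩ := hk
  set K : Fin (p + 2) := ⟨k, by omega⟩ with hK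
  rw [Matrix.det_apply]
  apply Finset.sum_eq_zero
  intro σ _
  -- pigeonhole: there exists a column i ≤ K with row σ i ≥ K
  have hpig : ∃ i : Fin (p + 2), i ≤ K ∧ K ≤ σ i := by
    by_contra h
    push_neg at h
    have hmaps : ∀ i ∈ Finset.Iic K, σ i ∈ Finset.Iio K := by
      intro i hi
      rw [Finset.mem_Iic] at hi
      rw [Finset.mem_Iio]
      exact h i hi
    have hcard : (Finset.Iio K).card < (Finset.Iic K).card := by
      rw [Fin.card_Iio, Fin.card_Iic]; omega
    obtain ⟨a, ha, b, hb, hab, heq⟩ :=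
      Finset.exists_ne_map_eq_of_card_lt_of_maps_to hcard hmaps
    exact hab (σ.injective heq)
  obtain ⟨i, hiK, hKσ⟩ := hpig
  have hzero : (Matrix.of fun i j : Fin (p + 2) =>
      ((c (β' (j : ℕ))).choose (r (α' (i : ℕ))) : ℚ)) (σ i) i = 0 := by
    have h1 : c (β' (i : ℕ)) ≤ c (β' k) := by
      rcases eq_or_lt_of_le (show (i : ℕ) ≤ k from hiK) with h | h
      · rw [h]
      · exact (hc (hβ' (Set.mem_Iic.mpr (by omega)) (Set.mem_Iic.mpr hkp) h)).le
    have h2 : r (α' k) ≤ r (α' ((σ i : ℕ))) := by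
      rcases eq_or_lt_of_le (show k ≤ ((σ i : ℕ)) from hKσ) with h | h
      · rw [h]
      · exact (hr (hα' (Set.mem_Iic.mpr hkp)
          (Set.mem_Iic.mpr (by omega)) h)).le
    simp only [Matrix.of_apply]
    rw [Nat.choose_eq_zero_of_lt (by omega)]
    norm_num
  have hprod : (∏ j : Fin (p + 2), (Matrix.of fun i j : Fin (p + 2) =>
      ((c (β' (j : ℕ))).choose (r (α' (i : ℕ))) : ℚ)) (σ j) j) = 0 :=
    Finset.prod_eq_zero (Finset.mem_univ i) hzero
  rw [hprod, smul_zero]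
end
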